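/- arXiv:1906.08384 — 2 statements merged into one kernel-verified Lean document; each statement's English description precedes it below -/
import Mathlib

section
/- An E-graph G = (V,E) in ℝⁿ is endotactic if and only if for every w ∈ ℝⁿ, the one-dimensional projection of G along w is endotactic; i.e., G is endotactic iff for every w ∈ ℝ, the E-graph in ℝ with edges (w·s, w·s') for (s,s') ∈ E is endotactic. -/
/-- An E-graph (given by its finite edge set) is endotactic. -/
def IsEndotactic {n : ℕ}
    (E : Finset (EuclideanSpace ℝ (Fin n) × EuclideanSpace ℝ (Fin n))) : Prop :=
  ∀ w : EuclideanSpace ℝ (Fin n), ∀ e ∈ E, (inner ℝ w (e.2 - e.1) : ℝ) < 0 →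
    ∃ f ∈ E, (0 : ℝ) < inner ℝ w (f.2 - f.1) ∧ (inner ℝ w f.1 : ℝ) < inner ℝ w e.1

/-- A one-dimensional E-graph (given by a set of edges in ℝ) is endotactic. -/
def IsEndotactic1D (E : Set (ℝ × ℝ)) : Prop :=
  ∀ c : ℝ, ∀ e ∈ E, c * (e.2 - e.1) < 0 →
    ∃ f ∈ E, 0 < c * (f.2 - f.1) ∧ c * f.1 < c * e.1

/-- An E-graph is endotactic iff all of its one-dimensional projections are endotactic. -/
theorem endotactic_iff_projections_endotactic {n : ℕ}
    (E : Finset (EuclideanSpace ℝ (Fin n) × EuclideanSpace ℝ (Fin n))) :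
    IsEndotactic E ↔
      ∀ w : EuclideanSpace ℝ (Fin n),
        IsEndotactic1D ((fun e : EuclideanSpace ℝ (Fin n) × EuclideanSpace ℝ (Fin n) =>
          ((inner ℝ w e.1 : ℝ), (inner ℝ w e.2 : ℝ))) '' (E : Set _)) := by
  constructor
  · intro h w c ep hep hneg
    obtain ⟨e, heE, rfl⟩ := hep
    simp only at hneg
    have hneg' : (inner ℝ (c • w) (e.2 - e.1) : ℝ) < 0 := by
      rw [real_inner_smul_left, inner_sub_right]; linarith
    obtain ⟨f, hfE, h1, h2⟩ := h (c • w) e heE hneg'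
    rw [real_inner_smul_left, inner_sub_right] at h1
    rw [real_inner_smul_left, real_inner_smul_left] at h2
    exact ⟨((inner ℝ w f.1 : ℝ), (inner ℝ w f.2 : ℝ)), ⟨f, hfE, rfl⟩, by linarith, by linarith⟩
  · intro h w e heE hneg
    have hneg' : (1 : ℝ) * ((inner ℝ w e.2 : ℝ) - (inner ℝ w e.1 : ℝ)) < 0 := by
      rw [inner_sub_right] at hneg; linarith
    obtain ⟨fp, ⟨f, hfE, rfl⟩, h1, h2⟩ := h w 1 _ ⟨e, heE, rfl⟩ hneg'
    simp only [one_mul] at h1 h2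
    refine ⟨f, hfE, ?_, h2⟩
    rw [inner_sub_right]; linarith
end

section
/- Let w ∈ ℝⁿ with ‖w‖ > 0, let u₁,...,uᵣ ∈ ℝⁿ with u₁·w > 0, let ε = sqrt( min{uᵢ·w : uᵢ·w > 0} / (2‖w‖ ∑ᵢ‖uᵢ‖) ) (assumed positive and well-defined), and set k₁ = 1/ε and kᵢ = ε for i ≥ 2. Then ((k₁/2)u₁ + ∑_{i=2}^r kᵢ uᵢ)·w ≥ 0. -/
open scoped BigOperators

/-- Estimate (39) in the converse theorem: with rate constants at the extremes of
`[ε, 1/ε]` for the specific `ε` built from the minimal positive projection, half of the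
dominant outward-pointing term dominates all the other terms. -/
theorem half_dominant_outward_term_nonneg {n r : ℕ} (w : EuclideanSpace ℝ (Fin n))
    (hw : 0 < ‖w‖) (u : Fin (r + 1) → EuclideanSpace ℝ (Fin n))
    (h0 : (0 : ℝ) < inner ℝ (u 0) w)
    (μ : ℝ)
    (hμmem : ∃ i, (0 : ℝ) < inner ℝ (u i) w ∧ μ = (inner ℝ (u i) w : ℝ))
    (hμmin : ∀ i, (0 : ℝ) < inner ℝ (u i) w → μ ≤ (inner ℝ (u i) w : ℝ))
    (ε : ℝ) (hε : ε = Real.sqrt (μ / (2 * ‖w‖ * ∑ i, ‖u i‖))) (hεpos : 0 < ε)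
    (k : Fin (r + 1) → ℝ) (hk0 : k 0 = 1 / ε) (hki : ∀ i, i ≠ 0 → k i = ε) :
    (0 : ℝ) ≤ inner ℝ ((k 0 / 2) • u 0 + ∑ i ∈ Finset.univ.erase 0, k i • u i) w := by
  set S : ℝ := ∑ i, ‖u i‖ with hSdef
  obtain ⟨i0, hi0pos, hμeq⟩ := hμmem
  have hμpos : 0 < μ := hμeq ▸ hi0pos
  have harg : 0 < μ / (2 * ‖w‖ * S) := Real.sqrt_pos.mp (hε ▸ hεpos)
  have hden : 0 < 2 * ‖w‖ * S := by
    rcases div_pos_iff.mp harg with ⟨_, h⟩ | ⟨h, _⟩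
    · exact h
    · linarith
  have hε2 : ε ^ 2 = μ / (2 * ‖w‖ * S) := by rw [hε, Real.sq_sqrt harg.le]
  have hμε : μ = ε ^ 2 * (2 * ‖w‖ * S) := by
    rw [hε2, div_mul_cancel₀ _ hden.ne']
  have hinner : (inner ℝ ((k 0 / 2) • u 0 + ∑ i ∈ Finset.univ.erase 0, k i • u i) w : ℝ)
      = (k 0 / 2) * inner ℝ (u 0) w + ∑ i ∈ Finset.univ.erase 0, k i * (inner ℝ (u i) w : ℝ) := by
    rw [inner_add_left, sum_inner, real_inner_smul_left]
    simp_rw [real_inner_smul_left]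
  rw [hinner]
  -- bound the tail sum
  have htail : -(ε * (S * ‖w‖)) ≤ ∑ i ∈ Finset.univ.erase 0, k i * (inner ℝ (u i) w : ℝ) := by
    have h1 : ∑ i ∈ Finset.univ.erase 0, (-(ε * (‖u i‖ * ‖w‖)))
        ≤ ∑ i ∈ Finset.univ.erase 0, k i * (inner ℝ (u i) w : ℝ) := by
      apply Finset.sum_le_sum
      intro i hi
      rw [hki i (Finset.ne_of_mem_erase hi)]
      have habs : |(inner ℝ (u i) w : ℝ)| ≤ ‖u i‖ * ‖w‖ := abs_real_inner_le_norm _ _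
      have : -(‖u i‖ * ‖w‖) ≤ (inner ℝ (u i) w : ℝ) := by
        have := neg_abs_le (inner ℝ (u i) w : ℝ); linarith
      nlinarith [hεpos.le]
    refine le_trans ?_ h1
    have e : ∑ i ∈ Finset.univ.erase 0, -(ε * (‖u i‖ * ‖w‖))
        = -(ε * ∑ i ∈ Finset.univ.erase 0, (‖u i‖ * ‖w‖)) := by
      rw [Finset.mul_sum, ← Finset.sum_neg_distrib]
    rw [e]
    have hsub : ∑ i ∈ Finset.univ.erase 0, ‖u i‖ ≤ S := by
      apply Finset.sum_le_sum_of_subset_of_nonneg (Finset.erase_subset _ _)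
      intro i _ _; positivity
    have hsum2 : ∑ i ∈ Finset.univ.erase 0, (‖u i‖ * ‖w‖) ≤ S * ‖w‖ := by
      rw [← Finset.sum_mul]; exact mul_le_mul_of_nonneg_right hsub hw.le
    nlinarith [hεpos.le]
  have hhead : (1 / ε / 2) * μ ≤ (k 0 / 2) * (inner ℝ (u 0) w : ℝ) := by
    rw [hk0]
    have hμle : μ ≤ (inner ℝ (u 0) w : ℝ) := hμmin 0 h0
    have h2ε : 0 < 1 / ε / 2 := by positivity
    nlinarith
  have hkey : (1 / ε / 2) * μ - ε * (S * ‖w‖) = 0 := by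
    rw [hμε]; field_simp; ring
  linarith
end
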